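/- Let σ be a cyclic permutation of an m-element set and let C(σ,l) denote the family of the m intervals (arcs) of length l along σ. If B ⊆ C(σ,b) and D ⊆ C(σ,d) are cross-intersecting (every B ∈ B meets every D ∈ D) and b+d ≤ m, then |B| + |D| ≤ m; moreover if both B and D are nonempty then |B| + |D| ≤ b + d. -/
import Mathlib

open Finset

/-- The arc of length `l` starting at position `i` along the cyclic permutation
`(x 0, x 1, …, x (m-1))`. -/
def arc {α : Type*} [DecidableEq α] (x : ℕ → α) (m l i : ℕ) : Finset α :=
  (Finset.range l).image (fun j => x ((i + j) % m))

/-- The family `C(σ, l)` of the `m` arcs of length `l` along the cyclic permutation. -/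
def arcs {α : Type*} [DecidableEq α] (x : ℕ → α) (m l : ℕ) : Finset (Finset α) :=
  (Finset.range m).image (fun i => arc x m l i)

section Aux

open Pointwise

lemma absorb_univ {m : ℕ} [NeZero m] (C : Finset (ZMod m)) (hC : C.Nonempty)
    (s : ZMod m) (k : ℕ)
    (J : Finset (ZMod m)) (hJ : J = (Finset.range k).image (fun a : ℕ => s + (a : ZMod m)))
    (habs : ∀ γ ∈ C, s + (k : ZMod m) + γ ∈ J + C) :
    J + C = Finset.univ := by
  have key : ∀ n : ℕ, ∀ γ ∈ C, s + (k : ZMod m) + (n : ZMod m) + γ ∈ J + C := by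
    intro n
    induction n with
    | zero => simpa using habs
    | succ n ih =>
      intro γ hγ
      have h1 : s + (k : ZMod m) + (n : ZMod m) + γ ∈ J + C := ih γ hγ
      rw [Finset.mem_add] at h1
      obtain ⟨y, hy, z, hz, hyz⟩ := h1
      rw [hJ, Finset.mem_image] at hy
      obtain ⟨a, ha, rfl⟩ := hy
      rw [Finset.mem_range] at ha
      have heq : s + (k : ZMod m) + ((n+1 : ℕ) : ZMod m) + γ = s + ((a+1 : ℕ) : ZMod m) + z := by
        push_cast
        linear_combination -hyz
      rw [heq]
      rcases Nat.lt_or_ge (a+1) k with h | h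
      · apply Finset.add_mem_add _ hz
        rw [hJ, Finset.mem_image]
        exact ⟨a+1, Finset.mem_range.mpr h, rfl⟩
      · have hak : a + 1 = k := by omega
        rw [hak]
        exact habs z hz
  apply Finset.eq_univ_of_forall
  intro v
  obtain ⟨γ, hγ⟩ := hC
  have := key ((v - (s + (k : ZMod m)) - γ).val) γ hγ
  rwa [ZMod.natCast_val, ZMod.cast_id,
    show s + (k:ZMod m) + (v - (s + (k : ZMod m)) - γ) + γ = v by ring] at this

lemma interval_CD {m : ℕ} [NeZero m] (C : Finset (ZMod m)) (hC : C.Nonempty) (s : ZMod m) :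
    ∀ k : ℕ, 1 ≤ k →
      ((Finset.range k).image (fun a : ℕ => s + (a : ZMod m)) + C = Finset.univ ∨
        k + C.card ≤ ((Finset.range k).image (fun a : ℕ => s + (a : ZMod m)) + C).card + 1) := by
  intro k
  induction k with
  | zero => omega
  | succ k ih =>
    intro _
    set J := (Finset.range k).image (fun a : ℕ => s + (a : ZMod m)) with hJ
    set J' := (Finset.range (k+1)).image (fun a : ℕ => s + (a : ZMod m)) with hJ'
    have hJsub : J ⊆ J' := by
      apply Finset.image_subset_image
      exact Finset.range_subset_range.mpr (by omega)
    rcases Nat.eq_zero_or_pos k with hk0 | hk1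
    · subst hk0
      right
      have hsing : J' = {s} := by
        rw [hJ']
        simp
      rw [hsing]
      have himg : ({s} : Finset (ZMod m)) + C = C.image (s + ·) := by
        ext z
        rw [Finset.mem_add]
        constructor
        · rintro ⟨y, hy, w, hw, rfl⟩
          simp only [Finset.mem_singleton] at hy
          subst hy
          exact Finset.mem_image_of_mem _ hw
        · rintro hz
          rw [Finset.mem_image] at hz
          obtain ⟨w, hw, rfl⟩ := hz
          exact ⟨s, Finset.mem_singleton_self s, w, hw, rfl⟩
      rw [himg, Finset.card_image_of_injective _ (add_right_injective s)]
      omega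
    rcases ih hk1 with huniv | hcard
    · left
      apply Finset.eq_univ_of_forall
      intro v
      have hv : v ∈ J + C := huniv ▸ Finset.mem_univ v
      rw [Finset.mem_add] at hv
      obtain ⟨y, hy, z, hz, hyz⟩ := hv
      exact hyz ▸ Finset.add_mem_add (hJsub hy) hz
    by_cases habs : ∀ γ ∈ C, s + (k : ZMod m) + γ ∈ J + C
    · left
      have huniv := absorb_univ C hC s k J hJ habs
      apply Finset.eq_univ_of_forall
      intro v
      have hv : v ∈ J + C := huniv ▸ Finset.mem_univ v
      rw [Finset.mem_add] at hv
      obtain ⟨y, hy, z, hz, hyz⟩ := hv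
      exact hyz ▸ Finset.add_mem_add (hJsub hy) hz
    · right
      push_neg at habs
      obtain ⟨γ, hγ, hout⟩ := habs
      have hmem : s + (k : ZMod m) + γ ∈ J' + C := by
        apply Finset.add_mem_add _ hγ
        rw [hJ', Finset.mem_image]
        exact ⟨k, Finset.mem_range.mpr (by omega), rfl⟩
      have hins : insert (s + (k : ZMod m) + γ) (J + C) ⊆ J' + C := by
        intro z hz
        rcases Finset.mem_insert.mp hz with rfl | hz
        · exact hmem
        · rw [Finset.mem_add] at hz
          obtain ⟨y, hy, w, hw, hyw⟩ := hz
          exact hyw ▸ Finset.add_mem_add (hJsub hy) hw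
      have h1 : (J + C).card + 1 ≤ (J' + C).card := by
        have := Finset.card_le_card hins
        rwa [Finset.card_insert_of_notMem hout] at this
      omega

lemma zmod_bound {m c : ℕ} [NeZero m] (hcm : c < m)
    (A B : Finset (ZMod m)) (h : ∀ a ∈ A, ∀ z ∈ B, (a + z).val < c) :
    A.card + B.card ≤ m ∧ (A.Nonempty → B.Nonempty → A.card + B.card ≤ c + 1) := by
  constructor
  · set W := B.image (fun z => (c : ZMod m) - z) with hW
    have hdisj : Disjoint A W := by
      rw [Finset.disjoint_left]
      intro a ha haW
      rw [hW, Finset.mem_image] at haW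
      obtain ⟨z, hz, rfl⟩ := haW
      have := h _ ha z hz
      rw [show (c:ZMod m) - z + z = (c:ZMod m) by ring, ZMod.val_natCast,
        Nat.mod_eq_of_lt hcm] at this
      omega
    have hcW : W.card = B.card := Finset.card_image_of_injective _ (sub_right_injective)
    calc A.card + B.card = (A ∪ W).card := by
            rw [Finset.card_union_of_disjoint hdisj, hcW]
      _ ≤ Fintype.card (ZMod m) := Finset.card_le_univ _
      _ = m := ZMod.card m
  · intro hA hB
    set C := A.image (fun a => -a) with hCdef
    have hCcard : C.card = A.card := Finset.card_image_of_injective _ neg_injective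
    have hCne : C.Nonempty := hA.image _
    set k := m - c with hk
    have hk1 : 1 ≤ k := by omega
    set s : ZMod m := ((c : ℕ) : ZMod m) with hs
    set J := (Finset.range k).image (fun a : ℕ => s + (a : ZMod m)) with hJ
    set K := J + C with hK
    have hdisj : Disjoint K B := by
      rw [Finset.disjoint_left]
      intro z hzK hzB
      rw [hK, Finset.mem_add] at hzK
      obtain ⟨y, hy, w, hw, hyw⟩ := hzK
      rw [hJ, Finset.mem_image] at hy
      obtain ⟨a, ha, rfl⟩ := hy
      rw [Finset.mem_range] at ha
      rw [hCdef, Finset.mem_image] at hw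
      obtain ⟨α, hα, rfl⟩ := hw
      have hval := h α hα z hzB
      have hz' : α + z = ((c + a : ℕ) : ZMod m) := by
        push_cast
        rw [hs] at hyw
        linear_combination -hyw
      rw [hz', ZMod.val_natCast, Nat.mod_eq_of_lt (by omega)] at hval
      omega
    have hKne : K ≠ Finset.univ := by
      intro hKu
      obtain ⟨z, hz⟩ := hB
      exact (Finset.disjoint_left.mp hdisj (hKu ▸ Finset.mem_univ z)) hz
    rcases interval_CD C hCne s k hk1 with huniv | hcard
    · exact absurd huniv hKne
    · rw [← hJ, ← hK, hCcard] at hcard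
      have h2 : K.card + B.card ≤ m := by
        calc K.card + B.card = (K ∪ B).card := (Finset.card_union_of_disjoint hdisj).symm
          _ ≤ Fintype.card (ZMod m) := Finset.card_le_univ _
          _ = m := ZMod.card m
      omega

lemma mem_arc {α : Type*} [DecidableEq α] {x : ℕ → α} {m l i : ℕ} {y : α} :
    y ∈ arc x m l i ↔ ∃ j < l, y = x ((i + j) % m) := by
  simp [arc, eq_comm]

lemma arc_inj {α : Type*} [DecidableEq α] {x : ℕ → α} {m l : ℕ}
    (hinj : ∀ i < m, ∀ j < m, x i = x j → i = j)
    (hl1 : 1 ≤ l) (hlm : l < m) {i i' : ℕ} (hi : i < m) (hi' : i' < m)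
    (h : arc x m l i = arc x m l i') : i = i' := by
  have hm : 0 < m := by omega
  have h1 : x i ∈ arc x m l i' := by
    rw [← h, mem_arc]
    exact ⟨0, hl1, by rw [Nat.add_zero, Nat.mod_eq_of_lt hi]⟩
  rw [mem_arc] at h1
  obtain ⟨j, hj, hxj⟩ := h1
  have hij : i = (i' + j) % m := hinj i hi _ (Nat.mod_lt _ hm) hxj
  rcases Nat.eq_zero_or_pos j with rfl | hj1
  · rw [Nat.add_zero, Nat.mod_eq_of_lt hi'] at hij
    exact hij
  · exfalso
    have hMe : Nat.ModEq m i (i' + j) := by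
      show i % m = (i' + j) % m
      rw [hij, Nat.mod_mod_of_dvd _ dvd_rfl]
    have hmod : (i + (m - 1)) % m = (i' + (j - 1)) % m := by
      calc (i + (m-1)) % m = (i' + j + (m-1)) % m := hMe.add_right _
        _ = (i' + (j-1) + m) % m := by congr 1; omega
        _ = (i' + (j-1)) % m := Nat.add_mod_right _ m
    have h3 : x ((i + (m-1)) % m) ∈ arc x m l i := by
      rw [h, mem_arc]
      exact ⟨j - 1, by omega, by rw [hmod]⟩
    rw [mem_arc] at h3
    obtain ⟨t, ht, hxt⟩ := h3
    have heq : (i + (m-1)) % m = (i + t) % m :=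
      hinj _ (Nat.mod_lt _ hm) _ (Nat.mod_lt _ hm) hxt
    have hcong : (m - 1) % m = t % m := Nat.ModEq.add_left_cancel' i heq
    rw [Nat.mod_eq_of_lt (by omega : m - 1 < m), Nat.mod_eq_of_lt (by omega : t < m)] at hcong
    omega

lemma arc_inter {α : Type*} [DecidableEq α] {x : ℕ → α} {m b d : ℕ}
    (hinj : ∀ i < m, ∀ j < m, x i = x j → i = j) (hm : 0 < m) {i j : ℕ}
    (h : (arc x m b i ∩ arc x m d j).Nonempty) :
    ∃ p < b, ∃ q < d, (i + p) % m = (j + q) % m := by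
  obtain ⟨y, hy⟩ := h
  rw [Finset.mem_inter, mem_arc, mem_arc] at hy
  obtain ⟨⟨p, hp, hyp⟩, ⟨q, hq, hyq⟩⟩ := hy
  exact ⟨p, hp, q, hq, hinj _ (Nat.mod_lt _ hm) _ (Nat.mod_lt _ hm) (hyp ▸ hyq)⟩

end Aux

theorem stmt_2 {α : Type*} [DecidableEq α] (m b d : ℕ) (x : ℕ → α)
    (hinj : ∀ i < m, ∀ j < m, x i = x j → i = j)
    (hb1 : 1 ≤ b) (hbm : b < m) (hd1 : 1 ≤ d) (hdm : d < m)
    (B D : Finset (Finset α))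
    (hB : B ⊆ arcs x m b) (hD : D ⊆ arcs x m d)
    (hcross : ∀ A ∈ B, ∀ C ∈ D, (A ∩ C).Nonempty)
    (hbd : b + d ≤ m) :
    B.card + D.card ≤ m ∧
      (B.Nonempty → D.Nonempty → B.card + D.card ≤ b + d) := by
  have hm : 0 < m := by omega
  haveI : NeZero m := ⟨by omega⟩
  classical
  set S := (Finset.range m).filter (fun i => arc x m b i ∈ B) with hS
  set T := (Finset.range m).filter (fun j => arc x m d j ∈ D) with hT
  have hBS : B = S.image (fun i => arc x m b i) := by
    ext E
    constructor
    · intro hE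
      have hEa := hB hE
      rw [arcs, Finset.mem_image] at hEa
      obtain ⟨i, hi, rfl⟩ := hEa
      exact Finset.mem_image_of_mem _ (Finset.mem_filter.mpr ⟨hi, hE⟩)
    · intro hE
      rw [Finset.mem_image] at hE
      obtain ⟨i, hi, rfl⟩ := hE
      exact (Finset.mem_filter.mp hi).2
  have hDT : D = T.image (fun j => arc x m d j) := by
    ext E
    constructor
    · intro hE
      have hEa := hD hE
      rw [arcs, Finset.mem_image] at hEa
      obtain ⟨j, hj, rfl⟩ := hEa
      exact Finset.mem_image_of_mem _ (Finset.mem_filter.mpr ⟨hj, hE⟩)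
    · intro hE
      rw [Finset.mem_image] at hE
      obtain ⟨j, hj, rfl⟩ := hE
      exact (Finset.mem_filter.mp hj).2
  have hSm : ∀ i ∈ S, i < m := fun i hi => Finset.mem_range.mp (Finset.mem_filter.mp hi).1
  have hTm : ∀ j ∈ T, j < m := fun j hj => Finset.mem_range.mp (Finset.mem_filter.mp hj).1
  have hcardB : B.card = S.card := by
    rw [hBS]
    exact Finset.card_image_of_injOn (fun i hi i' hi' h =>
      arc_inj hinj hb1 hbm (hSm i hi) (hSm i' hi') h)
  have hcardD : D.card = T.card := by
    rw [hDT]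
    exact Finset.card_image_of_injOn (fun j hj j' hj' h =>
      arc_inj hinj hd1 hdm (hTm j hj) (hTm j' hj') h)
  set c := b + d - 1 with hc
  set A : Finset (ZMod m) := S.image (fun i => ((d - 1 : ℕ) : ZMod m) - (i : ℕ)) with hA
  set Bz : Finset (ZMod m) := T.image (fun j => ((j : ℕ) : ZMod m)) with hBz
  have hcastinj : ∀ i ∈ Finset.range m, ∀ i' ∈ Finset.range m,
      ((i : ℕ) : ZMod m) = ((i' : ℕ) : ZMod m) → i = i' := by
    intro i hi i' hi' h
    have := congrArg ZMod.val h
    rwa [ZMod.val_natCast, ZMod.val_natCast, Nat.mod_eq_of_lt (Finset.mem_range.mp hi),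
      Nat.mod_eq_of_lt (Finset.mem_range.mp hi')] at this
  have hcardA : A.card = S.card := by
    rw [hA]
    apply Finset.card_image_of_injOn
    intro i hi i' hi' h
    have hii : ((i : ℕ) : ZMod m) = ((i' : ℕ) : ZMod m) := by
      have := sub_right_injective h
      exact this
    exact hcastinj i (Finset.mem_filter.mp hi).1 i' (Finset.mem_filter.mp hi').1 hii
  have hcardBz : Bz.card = T.card := by
    rw [hBz]
    apply Finset.card_image_of_injOn
    intro j hj j' hj' h
    exact hcastinj j (Finset.mem_filter.mp hj).1 j' (Finset.mem_filter.mp hj').1 h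
  have hcross' : ∀ a ∈ A, ∀ z ∈ Bz, (a + z).val < c := by
    intro a ha z hz
    rw [hA, Finset.mem_image] at ha
    obtain ⟨i, hi, rfl⟩ := ha
    rw [hBz, Finset.mem_image] at hz
    obtain ⟨j, hj, rfl⟩ := hz
    have hiB : arc x m b i ∈ B := (Finset.mem_filter.mp hi).2
    have hjD : arc x m d j ∈ D := (Finset.mem_filter.mp hj).2
    obtain ⟨p, hp, q, hq, hpq⟩ := arc_inter hinj hm (hcross _ hiB _ hjD)
    have hzmod : ((i : ℕ) : ZMod m) + (p : ℕ) = ((j : ℕ) : ZMod m) + (q : ℕ) := by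
      have := (ZMod.natCast_eq_natCast_iff (i + p) (j + q) m).mpr hpq
      push_cast at this
      exact this
    have h1 : ((d - 1 + p - q : ℕ) : ZMod m) + (q : ℕ) = ((d - 1 : ℕ) : ZMod m) + (p : ℕ) := by
      rw [← Nat.cast_add, ← Nat.cast_add]
      congr 1
      omega
    have hval : ((d - 1 : ℕ) : ZMod m) - (i : ℕ) + (j : ℕ) = ((d - 1 + p - q : ℕ) : ZMod m) := by
      linear_combination -h1 - hzmod
    rw [hval, ZMod.val_natCast, Nat.mod_eq_of_lt (by omega)]
    omega
  have hmain := zmod_bound (show c < m by omega) A Bz hcross'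
  constructor
  · have := hmain.1
    omega
  · intro hBne hDne
    have hSne : S.Nonempty := by
      rw [hBS] at hBne
      exact Finset.Nonempty.of_image hBne
    have hTne : T.Nonempty := by
      rw [hDT] at hDne
      exact Finset.Nonempty.of_image hDne
    have := hmain.2 (hSne.image _) (hTne.image _)
    omega
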